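/- Let u : ℝ × ℝⁿ → [−∞, ∞) be concave (i.e. its hypograph is convex), let (x,q) ∈ ℝ × ℝⁿ with u(x,q) finite, and let p ∈ ℝⁿ be a marginal price at (x,q), i.e. u(x − ⟨q', p⟩, q + q') ≤ u(x,q) for all q' ∈ ℝⁿ. Assume also that the point (x + ⟨q,p⟩, 0) lies in the topological interior of {(a,b) : u(a,b) > −∞}. Then there exist y ∈ ℝ and r ∈ ℝⁿ with r = y·p such that (y,r) is a supergradient of u at (x,q), i.e. u(a,b) ≤ u(x,q) + y·(a − x) + ⟨r, b − q⟩ for all (a,b); moreover, if in addition u(x + 1, q) > u(x,q), then y > 0. -/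

import Mathlib

open scoped RealInnerProductSpace

theorem stmt12 (n : ℕ) (u : ℝ × EuclideanSpace ℝ (Fin n) → WithBot ℝ)
    (hconc : Convex ℝ {wt : (ℝ × EuclideanSpace ℝ (Fin n)) × ℝ | (wt.2 : WithBot ℝ) ≤ u wt.1})
    (x : ℝ) (q : EuclideanSpace ℝ (Fin n)) (c : ℝ) (hfin : u (x, q) = (c : WithBot ℝ))
    (p : EuclideanSpace ℝ (Fin n))
    (hmarg : ∀ q' : EuclideanSpace ℝ (Fin n), u (x - ⟪q', p⟫, q + q') ≤ u (x, q))
    (hint : ((x + ⟪q, p⟫, (0 : EuclideanSpace ℝ (Fin n))) : ℝ × EuclideanSpace ℝ (Fin n)) ∈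
      interior {w : ℝ × EuclideanSpace ℝ (Fin n) | (⊥ : WithBot ℝ) < u w}) :
    ∃ (y : ℝ) (r : EuclideanSpace ℝ (Fin n)), r = y • p ∧
      (∀ (a : ℝ) (b : EuclideanSpace ℝ (Fin n)),
        u (a, b) ≤ ((c + y * (a - x) + ⟪r, b - q⟫ : ℝ) : WithBot ℝ)) ∧
      (u (x, q) < u (x + 1, q) → 0 < y) := by
  set t₀ : ℝ := x + ⟪q, p⟫ with ht₀
  set S : ℝ → Set ℝ :=
    fun t => {s | ∃ a : ℝ, ∃ b : EuclideanSpace ℝ (Fin n),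
      a + ⟪b, p⟫ = t ∧ (s : WithBot ℝ) ≤ u (a, b)} with hSdef
  -- convex combinations of achievable values are achievable
  have hcomb : ∀ (t₁ t₂ s₁ s₂ l : ℝ), s₁ ∈ S t₁ → s₂ ∈ S t₂ → 0 ≤ l → l ≤ 1 →
      l * s₁ + (1 - l) * s₂ ∈ S (l * t₁ + (1 - l) * t₂) := by
    rintro t₁ t₂ s₁ s₂ l ⟨a₁, b₁, h1, hu1⟩ ⟨a₂, b₂, h2, hu2⟩ hl hl1
    have hc := hconc (x := ((a₁, b₁), s₁)) (y := ((a₂, b₂), s₂)) hu1 hu2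
      (a := l) (b := 1 - l) hl (by linarith) (by ring)
    refine ⟨l * a₁ + (1 - l) * a₂, l • b₁ + (1 - l) • b₂, ?_, ?_⟩
    · rw [inner_add_left, real_inner_smul_left, real_inner_smul_left]
      nlinarith [h1, h2]
    · convert hc using 2 <;> simp [Prod.smul_def, smul_eq_mul]
  -- values at t₀ are at most c
  have hS0 : ∀ s ∈ S t₀, s ≤ c := by
    rintro s ⟨a, b, hab, hu⟩
    have hm := hmarg (b - q)
    have ha : x - ⟪b - q, p⟫ = a := by
      rw [inner_sub_left]; linarith
    rw [ha, add_sub_cancel, hfin] at hm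
    exact_mod_cast le_trans hu hm
  -- slope monotonicity
  have hslope : ∀ (t₁ t₂ s₁ s₂ : ℝ), t₀ < t₁ → t₂ < t₀ → s₁ ∈ S t₁ → s₂ ∈ S t₂ →
      (s₁ - c) / (t₁ - t₀) ≤ (c - s₂) / (t₀ - t₂) := by
    intro t₁ t₂ s₁ s₂ h1 h2 hs1 hs2
    set l : ℝ := (t₀ - t₂) / (t₁ - t₂) with hl
    have hd : (0:ℝ) < t₁ - t₂ := by linarith
    have hl0 : 0 ≤ l := div_nonneg (by linarith) (by linarith)
    have hl1 : l ≤ 1 := by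
      rw [div_le_one hd]; linarith
    have heq : l * t₁ + (1 - l) * t₂ = t₀ := by
      have hlm : l * (t₁ - t₂) = t₀ - t₂ := by rw [hl]; exact div_mul_cancel₀ _ (ne_of_gt hd)
      linear_combination hlm
    have hle := hS0 _ (heq ▸ hcomb t₁ t₂ s₁ s₂ l hs1 hs2 hl0 hl1)
    have hmul : (t₀ - t₂) * s₁ + (t₁ - t₀) * s₂ ≤ c * (t₁ - t₂) := by
      have h3 : l * s₁ + (1 - l) * s₂ ≤ c := hle
      rw [hl] at h3
      have h4 := mul_le_mul_of_nonneg_right h3 (le_of_lt hd)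
      field_simp at h4
      nlinarith [h4]
    rw [div_le_div_iff₀ (by linarith) (by linarith)]
    nlinarith [hmul]
  -- interior gives achievable values on both sides of t₀
  obtain ⟨ε, hε, hball⟩ := Metric.mem_nhds_iff.mp (mem_interior_iff_mem_nhds.mp hint)
  have hside : ∀ δ : ℝ, |δ| < ε → ∃ s, s ∈ S (t₀ + δ) := by
    intro δ hδ
    have hmem : ((t₀ + δ, (0 : EuclideanSpace ℝ (Fin n))) : ℝ × EuclideanSpace ℝ (Fin n)) ∈
        Metric.ball ((t₀, (0 : EuclideanSpace ℝ (Fin n))) : ℝ × EuclideanSpace ℝ (Fin n)) ε := by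
      rw [Metric.mem_ball, Prod.dist_eq]
      simp [Real.dist_eq, hδ, hε]
    have hbot := hball hmem
    simp only [Set.mem_setOf_eq] at hbot
    obtain ⟨m, hm⟩ := WithBot.ne_bot_iff_exists.mp (ne_of_gt hbot)
    exact ⟨m, t₀ + δ, 0, by simp, le_of_eq hm⟩
  obtain ⟨sR, hsR⟩ := hside (ε/2) (by rw [abs_of_pos (by linarith)]; linarith)
  obtain ⟨sL, hsL⟩ := hside (-(ε/2)) (by rw [abs_of_neg (by linarith)]; linarith)
  have hLt : t₀ + -(ε/2) < t₀ := by linarith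
  have hRt : t₀ < t₀ + ε/2 := by linarith
  -- set of right slopes
  set A : Set ℝ := {m | ∃ t s, t₀ < t ∧ s ∈ S t ∧ m = (s - c) / (t - t₀)} with hA
  have hAne : A.Nonempty := ⟨(sR - c) / (t₀ + ε/2 - t₀), t₀ + ε/2, sR, hRt, hsR, rfl⟩
  have hAub : ∀ m ∈ A, m ≤ (c - sL) / (t₀ - (t₀ + -(ε/2))) := by
    rintro m ⟨t, s, ht, hs, rfl⟩
    exact hslope t _ s sL ht hLt hs hsL
  have hAbdd : BddAbove A := ⟨_, hAub⟩
  set y : ℝ := sSup A with hy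
  refine ⟨y, y • p, rfl, ?_, ?_⟩
  · intro a b
    rcases eq_or_ne (u (a, b)) ⊥ with hb | hb
    · rw [hb]; exact bot_le
    obtain ⟨s, hs⟩ := WithBot.ne_bot_iff_exists.mp hb
    set t : ℝ := a + ⟪b, p⟫ with ht
    have hsS : s ∈ S t := ⟨a, b, rfl, le_of_eq hs⟩
    have hinner : ⟪y • p, b - q⟫ = y * (t - t₀) - y * (a - x) := by
      rw [real_inner_smul_left, inner_sub_right, ht, ht₀]
      rw [real_inner_comm p b, real_inner_comm p q]; ring
    have key : s ≤ c + y * (t - t₀) := by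
      rcases lt_trichotomy t t₀ with hlt | heq | hgt
      · have hub : y ≤ (c - s) / (t₀ - t) := by
          apply csSup_le hAne
          rintro m ⟨t', s', ht', hs', rfl⟩
          exact hslope t' t s' s ht' hlt hs' hsS
        have h5 := (le_div_iff₀ (by linarith : (0:ℝ) < t₀ - t)).mp hub
        nlinarith [h5]
      · have := hS0 s (heq ▸ hsS)
        rw [heq]; simpa using this
      · have hmem : (s - c) / (t - t₀) ∈ A := ⟨t, s, hgt, hsS, rfl⟩
        have h6 := le_csSup hAbdd hmem
        have h2 := (div_le_iff₀ (by linarith : (0:ℝ) < t - t₀)).mp h6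
        nlinarith [h2]
    calc u (a, b) = (s : WithBot ℝ) := hs.symm
      _ ≤ ((c + y * (a - x) + ⟪y • p, b - q⟫ : ℝ) : WithBot ℝ) := by
          rw [WithBot.coe_le_coe, hinner]; linarith
  · intro hlt
    rw [hfin] at hlt
    have hb : u (x + 1, q) ≠ ⊥ := ne_of_gt (lt_of_le_of_lt bot_le hlt)
    obtain ⟨s, hs⟩ := WithBot.ne_bot_iff_exists.mp hb
    have hcs : c < s := by rw [← hs] at hlt; exact_mod_cast hlt
    have hsS : s ∈ S (t₀ + 1) := ⟨x + 1, q, by rw [ht₀]; ring, le_of_eq hs⟩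
    have hmem : (s - c) / (t₀ + 1 - t₀) ∈ A := ⟨t₀ + 1, s, by linarith, hsS, rfl⟩
    have h7 := le_csSup hAbdd hmem
    have h2 : s - c ≤ y := by
      have : t₀ + 1 - t₀ = 1 := by ring
      rw [this, div_one] at h7; exact h7
    linarith
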